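/- Let H₁, H₂ be nonzero complex Hilbert spaces and let T ∈ B(H₂, H₁) with ‖T‖ ≤ 1. The Hilbert T₂-module H₁ ⊕ H₂ given by π_{(H₁,H₂,T)} is a cogenerator for the category of Hilbert T₂-modules if and only if T is not injective and T ≠ 0. -/

import Mathlib

set_option synthInstance.maxHeartbeats 1000000
set_option maxHeartbeats 2000000

noncomputable section

open Filter

open scoped ENNReal Matrix.Norms.L2Operator

variable (A : Type) [NonUnitalNormedRing A] [NormedSpace ℂ A]

/-- A Hilbert `A`-module structure on the Hilbert space `K`: a contractive algebra
homomorphism `π : A → B(K)` which is nondegenerate, i.e. the linear span of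
`{π a x : a ∈ A, x ∈ K}` is dense in `K`. -/
def IsHilbertRep {K : Type} [NormedAddCommGroup K] [InnerProductSpace ℂ K] [CompleteSpace K]
    (π : A →ₙₐ[ℂ] (K →L[ℂ] K)) : Prop :=
  (∀ a : A, ‖π a‖ ≤ ‖a‖) ∧
  Dense ((Submodule.span ℂ {x : K | ∃ (a : A) (y : K), π a y = x} : Submodule ℂ K) : Set K)

/-- A bounded `A`-module map between Hilbert `A`-modules. -/
def IsModuleMap {K L : Type} [NormedAddCommGroup K] [InnerProductSpace ℂ K]
    [NormedAddCommGroup L] [InnerProductSpace ℂ L]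
    (πK : A →ₙₐ[ℂ] (K →L[ℂ] K)) (πL : A →ₙₐ[ℂ] (L →L[ℂ] L)) (T : K →L[ℂ] L) : Prop :=
  ∀ (a : A) (x : K), T (πK a x) = πL a (T x)

/-- `H` is a cogenerator for the category of Hilbert `A`-modules: for all Hilbert
`A`-modules `K`, `L` and every nonzero bounded `A`-module map `R : K → L` there is a
bounded `A`-module map `V : L → H` with `V ∘ R ≠ 0`. -/
def IsCogenerator {H : Type} [NormedAddCommGroup H] [InnerProductSpace ℂ H] [CompleteSpace H]
    (πH : A →ₙₐ[ℂ] (H →L[ℂ] H)) : Prop :=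
  ∀ (K L : Type) [NormedAddCommGroup K] [InnerProductSpace ℂ K] [CompleteSpace K]
    [NormedAddCommGroup L] [InnerProductSpace ℂ L] [CompleteSpace L],
    ∀ (πK : A →ₙₐ[ℂ] (K →L[ℂ] K)) (πL : A →ₙₐ[ℂ] (L →L[ℂ] L)),
      IsHilbertRep A πK → IsHilbertRep A πL →
      ∀ R : K →L[ℂ] L, IsModuleMap A πK πL R → R ≠ 0 →
        ∃ V : L →L[ℂ] H, IsModuleMap A πL πH V ∧ V.comp R ≠ 0

/-- The algebra of upper triangular `2 × 2` complex matrices, normed as operators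
on the Euclidean space `ℂ²` (the `L²` operator norm). -/
def T2 : Subalgebra ℂ (Matrix (Fin 2) (Fin 2) ℂ) where
  carrier := {M | M 1 0 = 0}
  mul_mem' := by
    intro a b ha hb
    simp only [Set.mem_setOf_eq] at *
    simp [Matrix.mul_apply, Fin.sum_univ_two, ha, hb]
  add_mem' := by
    intro a b ha hb
    simp only [Set.mem_setOf_eq] at *
    simp [ha, hb]
  algebraMap_mem' := by
    intro c
    simp [Matrix.algebraMap_eq_diagonal]

/-- The operator `(ζ, η) ↦ (a • ζ + b • (T η), c • η)` on `H₁ × H₂`. -/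
def blockOp {H₁ H₂ : Type} [NormedAddCommGroup H₁] [InnerProductSpace ℂ H₁]
    [NormedAddCommGroup H₂] [InnerProductSpace ℂ H₂]
    (T : H₂ →L[ℂ] H₁) (a b c : ℂ) : (H₁ × H₂) →L[ℂ] (H₁ × H₂) :=
  (a • ContinuousLinearMap.fst ℂ H₁ H₂ +
    b • T.comp (ContinuousLinearMap.snd ℂ H₁ H₂)).prod
    (c • ContinuousLinearMap.snd ℂ H₁ H₂)

variable {H₁ H₂ : Type} [NormedAddCommGroup H₁] [InnerProductSpace ℂ H₁]
  [NormedAddCommGroup H₂] [InnerProductSpace ℂ H₂]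

theorem blockOp_apply (T : H₂ →L[ℂ] H₁) (a b c : ℂ) (x : H₁ × H₂) :
    blockOp T a b c x = (a • x.1 + b • T x.2, c • x.2) := rfl

theorem blockOp_mul (T : H₂ →L[ℂ] H₁) (a b c a' b' c' : ℂ) :
    (blockOp T a b c).comp (blockOp T a' b' c') =
      blockOp T (a * a') (a * b' + b * c') (c * c') := by
  refine ContinuousLinearMap.ext fun x => Prod.ext ?_ ?_
  · simp [blockOp_apply, smul_smul, smul_add, add_smul]
    abel
  · simp [blockOp_apply, smul_smul]

theorem blockOp_add (T : H₂ →L[ℂ] H₁) (a b c a' b' c' : ℂ) :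
    blockOp T (a + a') (b + b') (c + c') = blockOp T a b c + blockOp T a' b' c' := by
  refine ContinuousLinearMap.ext fun x => Prod.ext ?_ ?_
  · simp [blockOp_apply, add_smul]
    abel
  · simp [blockOp_apply, add_smul]

theorem blockOp_smul (T : H₂ →L[ℂ] H₁) (s a b c : ℂ) :
    blockOp T (s * a) (s * b) (s * c) = s • blockOp T a b c := by
  refine ContinuousLinearMap.ext fun x => Prod.ext ?_ ?_
  · simp [blockOp_apply, smul_smul, smul_add]
  · simp [blockOp_apply, smul_smul]

theorem blockOp_zero (T : H₂ →L[ℂ] H₁) : blockOp T 0 0 0 = 0 := by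
  refine ContinuousLinearMap.ext fun x => Prod.ext ?_ ?_ <;> simp [blockOp_apply]

/-- Conjugation of an operator on `H₁ × H₂` to the `L²`-direct sum `WithLp 2 (H₁ × H₂)`. -/
def prodL2Conj (X : (H₁ × H₂) →L[ℂ] (H₁ × H₂)) :
    WithLp 2 (H₁ × H₂) →L[ℂ] WithLp 2 (H₁ × H₂) :=
  ((WithLp.prodContinuousLinearEquiv 2 ℂ H₁ H₂).symm.toContinuousLinearMap.comp X).comp
    (WithLp.prodContinuousLinearEquiv 2 ℂ H₁ H₂).toContinuousLinearMap

theorem prodL2Conj_add (X Y : (H₁ × H₂) →L[ℂ] (H₁ × H₂)) :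
    prodL2Conj (X + Y) = prodL2Conj X + prodL2Conj Y := by
  unfold prodL2Conj
  rw [ContinuousLinearMap.comp_add, ContinuousLinearMap.add_comp]

theorem prodL2Conj_smul (s : ℂ) (X : (H₁ × H₂) →L[ℂ] (H₁ × H₂)) :
    prodL2Conj (s • X) = s • prodL2Conj X := by
  unfold prodL2Conj
  rw [ContinuousLinearMap.comp_smul, ContinuousLinearMap.smul_comp]

theorem prodL2Conj_zero : prodL2Conj (0 : (H₁ × H₂) →L[ℂ] (H₁ × H₂)) = 0 := by
  unfold prodL2Conj
  rw [ContinuousLinearMap.comp_zero, ContinuousLinearMap.zero_comp]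

theorem prodL2Conj_mul (X Y : (H₁ × H₂) →L[ℂ] (H₁ × H₂)) :
    prodL2Conj X * prodL2Conj Y = prodL2Conj (X.comp Y) := by
  ext x <;> simp [prodL2Conj, ContinuousLinearMap.mul_apply]

/-- The representation `π_{(H₁,H₂,T)}` of `T2` on the Hilbert space direct sum `H₁ ⊕ H₂`
determined by a contraction `T : H₂ → H₁`: the upper triangular matrix `[[a, b], [0, c]]`
acts by `(ζ, η) ↦ (a ζ + b (T η), c η)`. -/
def triRep (T : H₂ →L[ℂ] H₁) :
    ↥T2 →ₙₐ[ℂ] (WithLp 2 (H₁ × H₂) →L[ℂ] WithLp 2 (H₁ × H₂)) where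
  toFun M := prodL2Conj (blockOp T ((M : Matrix (Fin 2) (Fin 2) ℂ) 0 0)
    ((M : Matrix (Fin 2) (Fin 2) ℂ) 0 1) ((M : Matrix (Fin 2) (Fin 2) ℂ) 1 1))
  map_add' M N := by
    have h : ((M + N : ↥T2) : Matrix (Fin 2) (Fin 2) ℂ)
        = (M : Matrix (Fin 2) (Fin 2) ℂ) + (N : Matrix (Fin 2) (Fin 2) ℂ) := rfl
    simp only [h, Matrix.add_apply, blockOp_add, prodL2Conj_add]
  map_smul' s M := by
    have h : ((s • M : ↥T2) : Matrix (Fin 2) (Fin 2) ℂ)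
        = s • (M : Matrix (Fin 2) (Fin 2) ℂ) := rfl
    simp only [h, Matrix.smul_apply, smul_eq_mul, blockOp_smul, prodL2Conj_smul,
      RingHom.id_apply, MonoidHom.id_apply]
  map_zero' := by
    have h : ((0 : ↥T2) : Matrix (Fin 2) (Fin 2) ℂ) = 0 := rfl
    simp only [h, Matrix.zero_apply, blockOp_zero, prodL2Conj_zero]
  map_mul' M N := by
    have hM : (M : Matrix (Fin 2) (Fin 2) ℂ) 1 0 = 0 := M.2
    have hN : (N : Matrix (Fin 2) (Fin 2) ℂ) 1 0 = 0 := N.2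
    have hMN : ((M * N : ↥T2) : Matrix (Fin 2) (Fin 2) ℂ)
        = (M : Matrix (Fin 2) (Fin 2) ℂ) * (N : Matrix (Fin 2) (Fin 2) ℂ) := rfl
    have e00 : ((M * N : ↥T2) : Matrix (Fin 2) (Fin 2) ℂ) 0 0
        = (M : Matrix (Fin 2) (Fin 2) ℂ) 0 0 * (N : Matrix (Fin 2) (Fin 2) ℂ) 0 0 := by
      simp [hMN, Matrix.mul_apply, Fin.sum_univ_two, hN]
    have e01 : ((M * N : ↥T2) : Matrix (Fin 2) (Fin 2) ℂ) 0 1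
        = (M : Matrix (Fin 2) (Fin 2) ℂ) 0 0 * (N : Matrix (Fin 2) (Fin 2) ℂ) 0 1
          + (M : Matrix (Fin 2) (Fin 2) ℂ) 0 1 * (N : Matrix (Fin 2) (Fin 2) ℂ) 1 1 := by
      simp [hMN, Matrix.mul_apply, Fin.sum_univ_two]
    have e11 : ((M * N : ↥T2) : Matrix (Fin 2) (Fin 2) ℂ) 1 1
        = (M : Matrix (Fin 2) (Fin 2) ℂ) 1 1 * (N : Matrix (Fin 2) (Fin 2) ℂ) 1 1 := by
      simp [hMN, Matrix.mul_apply, Fin.sum_univ_two, hM]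
    simp only [e00, e01, e11, ← blockOp_mul, ← prodL2Conj_mul]

section Aux

def eM11 : ↥T2 := ⟨!![1,0;0,0], by show _ = 0; simp⟩
def eM12 : ↥T2 := ⟨!![0,1;0,0], by show _ = 0; simp⟩
def eM22 : ↥T2 := ⟨!![0,0;0,1], by show _ = 0; simp⟩

example (x : ↥T2) : ‖x‖ = ‖(x : Matrix (Fin 2) (Fin 2) ℂ)‖ := rfl

@[simp] lemma eM11_00 : ((eM11 : ↥T2) : Matrix (Fin 2) (Fin 2) ℂ) 0 0 = 1 := rfl
@[simp] lemma eM11_01 : ((eM11 : ↥T2) : Matrix (Fin 2) (Fin 2) ℂ) 0 1 = 0 := rfl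
@[simp] lemma eM11_11 : ((eM11 : ↥T2) : Matrix (Fin 2) (Fin 2) ℂ) 1 1 = 0 := rfl
@[simp] lemma eM12_00 : ((eM12 : ↥T2) : Matrix (Fin 2) (Fin 2) ℂ) 0 0 = 0 := rfl
@[simp] lemma eM12_01 : ((eM12 : ↥T2) : Matrix (Fin 2) (Fin 2) ℂ) 0 1 = 1 := rfl
@[simp] lemma eM12_11 : ((eM12 : ↥T2) : Matrix (Fin 2) (Fin 2) ℂ) 1 1 = 0 := rfl
@[simp] lemma eM22_00 : ((eM22 : ↥T2) : Matrix (Fin 2) (Fin 2) ℂ) 0 0 = 0 := rfl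
@[simp] lemma eM22_01 : ((eM22 : ↥T2) : Matrix (Fin 2) (Fin 2) ℂ) 0 1 = 0 := rfl
@[simp] lemma eM22_11 : ((eM22 : ↥T2) : Matrix (Fin 2) (Fin 2) ℂ) 1 1 = 1 := rfl

lemma eM11_mul (M : ↥T2) : eM11 * M
    = ((M : Matrix (Fin 2) (Fin 2) ℂ) 0 0) • eM11 + ((M : Matrix (Fin 2) (Fin 2) ℂ) 0 1) • eM12 := by
  have hM : (M : Matrix (Fin 2) (Fin 2) ℂ) 1 0 = 0 := M.2
  apply Subtype.ext
  show (eM11 : Matrix (Fin 2) (Fin 2) ℂ) * M = _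
  ext i j
  fin_cases i <;> fin_cases j <;>
    simp [eM11, eM12, Matrix.mul_apply, Fin.sum_univ_two, hM]

lemma eM12_mul (M : ↥T2) : eM12 * M = ((M : Matrix (Fin 2) (Fin 2) ℂ) 1 1) • eM12 := by
  have hM : (M : Matrix (Fin 2) (Fin 2) ℂ) 1 0 = 0 := M.2
  apply Subtype.ext
  show (eM12 : Matrix (Fin 2) (Fin 2) ℂ) * M = _
  ext i j
  fin_cases i <;> fin_cases j <;>
    simp [eM12, Matrix.mul_apply, Fin.sum_univ_two, hM]

lemma eM22_mul (M : ↥T2) : eM22 * M = ((M : Matrix (Fin 2) (Fin 2) ℂ) 1 1) • eM22 := by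
  have hM : (M : Matrix (Fin 2) (Fin 2) ℂ) 1 0 = 0 := M.2
  apply Subtype.ext
  show (eM22 : Matrix (Fin 2) (Fin 2) ℂ) * M = _
  ext i j
  fin_cases i <;> fin_cases j <;>
    simp [eM22, Matrix.mul_apply, Fin.sum_univ_two, hM]

lemma one_eq_eM : (1 : ↥T2) = eM11 + eM22 := by
  apply Subtype.ext
  show (1 : Matrix (Fin 2) (Fin 2) ℂ) = _
  ext i j
  fin_cases i <;> fin_cases j <;> simp [eM11, eM22, Matrix.one_apply]

end Aux
section Aux2

variable {L : Type} [NormedAddCommGroup L] [InnerProductSpace ℂ L] [CompleteSpace L]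

lemma rep_one (π : ↥T2 →ₙₐ[ℂ] (L →L[ℂ] L)) (h : IsHilbertRep ↥T2 π) :
    π 1 = 1 := by
  have key : ∀ x ∈ Submodule.span ℂ {x : L | ∃ (a : ↥T2) (y : L), π a y = x}, π 1 x = x := by
    intro x hx
    induction hx using Submodule.span_induction with
    | mem x hx =>
        obtain ⟨a, y, rfl⟩ := hx
        calc π 1 (π a y) = (π 1 * π a) y := rfl
        _ = π (1 * a) y := by rw [← map_mul]
        _ = π a y := by rw [one_mul]
    | zero => simp
    | add x y _ _ hx hy => simp [hx, hy]
    | smul c x _ hx => simp [hx]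
  have heq : ⇑(π 1) = id :=
    Continuous.ext_on h.2 (π 1).continuous continuous_id (fun x hx => key x hx)
  ext x
  exact congrFun heq x

lemma rep_dense (π : ↥T2 →ₙₐ[ℂ] (L →L[ℂ] L)) (h1 : π 1 = 1) :
    Dense ((Submodule.span ℂ {x : L | ∃ (a : ↥T2) (y : L), π a y = x} : Submodule ℂ L) : Set L) := by
  have hall : ∀ x : L, x ∈ ((Submodule.span ℂ {x : L | ∃ (a : ↥T2) (y : L), π a y = x} : Submodule ℂ L) : Set L) :=
    fun x => Submodule.subset_span ⟨1, x, by rw [h1]; rfl⟩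
  rw [Set.eq_univ_of_forall hall]
  exact dense_univ

lemma entry_le_norm (M : ↥T2) (i j : Fin 2) :
    ‖(M : Matrix (Fin 2) (Fin 2) ℂ) i j‖ ≤ ‖M‖ := by
  have h := (M : Matrix (Fin 2) (Fin 2) ℂ).l2_opNorm_mulVec (EuclideanSpace.single j 1)
  rw [EuclideanSpace.norm_single, norm_one, mul_one] at h
  refine le_trans ?_ h
  set v : EuclideanSpace ℂ (Fin 2) :=
    (EuclideanSpace.equiv (Fin 2) ℂ).symm ((M : Matrix (Fin 2) (Fin 2) ℂ).mulVec (EuclideanSpace.single j 1)) with hv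
  have hvi : v i = (M : Matrix (Fin 2) (Fin 2) ℂ) i j := by
    show ((M : Matrix (Fin 2) (Fin 2) ℂ).mulVec (Pi.single j 1)) i = _
    rw [Matrix.mulVec_single]
    simp
  calc ‖(M : Matrix (Fin 2) (Fin 2) ℂ) i j‖ = ‖(inner ℂ (EuclideanSpace.single i (1:ℂ)) v : ℂ)‖ := by
        rw [EuclideanSpace.inner_single_left]; simp [hvi]
  _ ≤ ‖EuclideanSpace.single i (1:ℂ)‖ * ‖v‖ := norm_inner_le_norm _ _
  _ = ‖v‖ := by rw [EuclideanSpace.norm_single, norm_one, one_mul]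

end Aux2
section Aux3

/-- The representation of `T2` on `ℂ` by the `(i,i)` diagonal entry. -/
def repDiag (i : Fin 2) : ↥T2 →ₙₐ[ℂ] (ℂ →L[ℂ] ℂ) where
  toFun M := ((M : Matrix (Fin 2) (Fin 2) ℂ) i i) • (1 : ℂ →L[ℂ] ℂ)
  map_add' M N := by
    have h : ((M + N : ↥T2) : Matrix (Fin 2) (Fin 2) ℂ) i i
        = (M : Matrix (Fin 2) (Fin 2) ℂ) i i + (N : Matrix (Fin 2) (Fin 2) ℂ) i i := rfl
    refine ContinuousLinearMap.ext fun c => ?_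
    show ((M + N : ↥T2) : Matrix (Fin 2) (Fin 2) ℂ) i i * c
      = (M : Matrix (Fin 2) (Fin 2) ℂ) i i * c + (N : Matrix (Fin 2) (Fin 2) ℂ) i i * c
    rw [h]; ring
  map_smul' s M := by
    have h : ((s • M : ↥T2) : Matrix (Fin 2) (Fin 2) ℂ) i i
        = s * (M : Matrix (Fin 2) (Fin 2) ℂ) i i := rfl
    refine ContinuousLinearMap.ext fun c => ?_
    show ((s • M : ↥T2) : Matrix (Fin 2) (Fin 2) ℂ) i i * c
      = s * ((M : Matrix (Fin 2) (Fin 2) ℂ) i i * c)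
    rw [h]; ring
  map_zero' := by
    have h : ((0 : ↥T2) : Matrix (Fin 2) (Fin 2) ℂ) i i = 0 := rfl
    refine ContinuousLinearMap.ext fun c => ?_
    show ((0 : ↥T2) : Matrix (Fin 2) (Fin 2) ℂ) i i * c = 0
    rw [h]; ring
  map_mul' M N := by
    have hM : (M : Matrix (Fin 2) (Fin 2) ℂ) 1 0 = 0 := M.2
    have hN : (N : Matrix (Fin 2) (Fin 2) ℂ) 1 0 = 0 := N.2
    have hmn : ((M * N : ↥T2) : Matrix (Fin 2) (Fin 2) ℂ) i i
        = (M : Matrix (Fin 2) (Fin 2) ℂ) i i * (N : Matrix (Fin 2) (Fin 2) ℂ) i i := by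
      fin_cases i <;> simp [Matrix.mul_apply, Fin.sum_univ_two, hM, hN]
    refine ContinuousLinearMap.ext fun c => ?_
    show ((M * N : ↥T2) : Matrix (Fin 2) (Fin 2) ℂ) i i * c
      = (M : Matrix (Fin 2) (Fin 2) ℂ) i i * ((N : Matrix (Fin 2) (Fin 2) ℂ) i i * c)
    rw [hmn]; ring

@[simp] lemma repDiag_apply (i : Fin 2) (M : ↥T2) (c : ℂ) :
    repDiag i M c = ((M : Matrix (Fin 2) (Fin 2) ℂ) i i) * c := rfl

lemma repDiag_isRep (i : Fin 2) : IsHilbertRep ↥T2 (repDiag i) := by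
  constructor
  · intro M
    apply ContinuousLinearMap.opNorm_le_bound _ (norm_nonneg M)
    intro c
    rw [repDiag_apply, norm_mul]
    exact mul_le_mul_of_nonneg_right (entry_le_norm M i i) (norm_nonneg c)
  · apply rep_dense
    refine ContinuousLinearMap.ext fun c => ?_
    show ((1 : ↥T2) : Matrix (Fin 2) (Fin 2) ℂ) i i * c = c
    have h1 : ((1 : ↥T2) : Matrix (Fin 2) (Fin 2) ℂ) i i = 1 := by
      fin_cases i <;> rfl
    rw [h1, one_mul]

/-- The representation of `T2` on `EuclideanSpace ℂ (Fin 2)` by matrix multiplication. -/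
def repE : ↥T2 →ₙₐ[ℂ] (EuclideanSpace ℂ (Fin 2) →L[ℂ] EuclideanSpace ℂ (Fin 2)) where
  toFun M := Matrix.toEuclideanCLM (𝕜 := ℂ) (M : Matrix (Fin 2) (Fin 2) ℂ)
  map_add' M N := by
    show Matrix.toEuclideanCLM (𝕜 := ℂ) ((M + N : ↥T2) : Matrix (Fin 2) (Fin 2) ℂ)
      = Matrix.toEuclideanCLM (𝕜 := ℂ) (M : Matrix (Fin 2) (Fin 2) ℂ)
        + Matrix.toEuclideanCLM (𝕜 := ℂ) (N : Matrix (Fin 2) (Fin 2) ℂ)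
    rw [show ((M + N : ↥T2) : Matrix (Fin 2) (Fin 2) ℂ)
      = (M : Matrix (Fin 2) (Fin 2) ℂ) + (N : Matrix (Fin 2) (Fin 2) ℂ) from rfl, map_add]
  map_smul' s M := by
    show Matrix.toEuclideanCLM (𝕜 := ℂ) ((s • M : ↥T2) : Matrix (Fin 2) (Fin 2) ℂ)
      = s • Matrix.toEuclideanCLM (𝕜 := ℂ) (M : Matrix (Fin 2) (Fin 2) ℂ)
    rw [show ((s • M : ↥T2) : Matrix (Fin 2) (Fin 2) ℂ)
      = s • (M : Matrix (Fin 2) (Fin 2) ℂ) from rfl, map_smul]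
  map_zero' := by
    show Matrix.toEuclideanCLM (𝕜 := ℂ) ((0 : ↥T2) : Matrix (Fin 2) (Fin 2) ℂ) = 0
    rw [show ((0 : ↥T2) : Matrix (Fin 2) (Fin 2) ℂ) = 0 from rfl, map_zero]
  map_mul' M N := by
    show Matrix.toEuclideanCLM (𝕜 := ℂ) ((M * N : ↥T2) : Matrix (Fin 2) (Fin 2) ℂ)
      = Matrix.toEuclideanCLM (𝕜 := ℂ) (M : Matrix (Fin 2) (Fin 2) ℂ)
        * Matrix.toEuclideanCLM (𝕜 := ℂ) (N : Matrix (Fin 2) (Fin 2) ℂ)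
    rw [show ((M * N : ↥T2) : Matrix (Fin 2) (Fin 2) ℂ)
      = (M : Matrix (Fin 2) (Fin 2) ℂ) * (N : Matrix (Fin 2) (Fin 2) ℂ) from rfl, map_mul]

@[simp] lemma repE_apply (M : ↥T2) (x : EuclideanSpace ℂ (Fin 2)) :
    repE M x = Matrix.toEuclideanCLM (𝕜 := ℂ) (M : Matrix (Fin 2) (Fin 2) ℂ) x := rfl

lemma repE_isRep : IsHilbertRep ↥T2 repE := by
  constructor
  · intro M
    exact le_of_eq (Matrix.cstar_norm_def (M : Matrix (Fin 2) (Fin 2) ℂ)).symm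
  · apply rep_dense
    show Matrix.toEuclideanCLM (𝕜 := ℂ) ((1 : ↥T2) : Matrix (Fin 2) (Fin 2) ℂ) = 1
    rw [show ((1 : ↥T2) : Matrix (Fin 2) (Fin 2) ℂ) = 1 from rfl, map_one]

end Aux3
section Aux4

lemma triRep_apply_eq (T : H₂ →L[ℂ] H₁) (M : ↥T2) (x : WithLp 2 (H₁ × H₂)) :
    triRep T M x = (WithLp.prodContinuousLinearEquiv 2 ℂ H₁ H₂).symm
      (((M : Matrix (Fin 2) (Fin 2) ℂ) 0 0) • ((WithLp.prodContinuousLinearEquiv 2 ℂ H₁ H₂) x).1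
         + ((M : Matrix (Fin 2) (Fin 2) ℂ) 0 1) • T (((WithLp.prodContinuousLinearEquiv 2 ℂ H₁ H₂) x).2),
       ((M : Matrix (Fin 2) (Fin 2) ℂ) 1 1) • ((WithLp.prodContinuousLinearEquiv 2 ℂ H₁ H₂) x).2) := rfl

end Aux4
/-- The Hilbert `T2`-module `H₁ ⊕ H₂` given by `π_(H₁,H₂,T)` is a cogenerator if and only if `T` is not injective and `T ≠ 0`. -/
theorem triRep_cogenerator_iff [CompleteSpace H₁] [CompleteSpace H₂]
    [Nontrivial H₁] [Nontrivial H₂]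
    (T : H₂ →L[ℂ] H₁) (hT : ‖T‖ ≤ 1) :
    IsCogenerator ↥T2 (triRep T) ↔ (¬Function.Injective ⇑T ∧ T ≠ 0) := by
  constructor
  · intro hCog
    constructor
    · -- T is not injective
      intro hinj
      have h1 : (1 : ℂ →L[ℂ] ℂ) ≠ 0 := by
        intro h
        have h2 : (1 : ℂ →L[ℂ] ℂ) 1 = (0 : ℂ →L[ℂ] ℂ) 1 := by rw [h]
        simp at h2
      obtain ⟨V, hVmod, hVR⟩ := hCog ℂ ℂ (repDiag 1) (repDiag 1) (repDiag_isRep 1)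
        (repDiag_isRep 1) 1 (fun a x => rfl) h1
      apply hVR
      have hVzero : V = 0 := by
        refine ContinuousLinearMap.ext fun c => ?_
        have h22 := hVmod eM22 c
        have h12 := hVmod eM12 c
        rw [repDiag_apply, eM22_11, one_mul, triRep_apply_eq] at h22
        rw [repDiag_apply, eM12_11, zero_mul, map_zero, triRep_apply_eq] at h12
        simp only [eM22_00, eM22_01, eM22_11, zero_smul, one_smul, add_zero, zero_add] at h22
        simp only [eM12_00, eM12_01, eM12_11, zero_smul, one_smul, add_zero, zero_add] at h12
        have h12' : (T (((WithLp.prodContinuousLinearEquiv 2 ℂ H₁ H₂) (V c)).2),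
            (0 : H₂)) = 0 := by
          have := (ContinuousLinearEquiv.map_eq_zero_iff
            (WithLp.prodContinuousLinearEquiv 2 ℂ H₁ H₂).symm).mp h12.symm
          exact this
        have hT2 : T (((WithLp.prodContinuousLinearEquiv 2 ℂ H₁ H₂) (V c)).2) = 0 :=
          congrArg Prod.fst h12'
        have hsnd : ((WithLp.prodContinuousLinearEquiv 2 ℂ H₁ H₂) (V c)).2 = 0 := by
          apply hinj
          rw [hT2, map_zero]
        rw [hsnd] at h22
        rw [h22]
        simp only [smul_zero, ContinuousLinearMap.zero_apply]
        rw [show ((0:H₁), (0:H₂)) = (0 : H₁ × H₂) from rfl, map_zero]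
      rw [hVzero, ContinuousLinearMap.zero_comp]
    · -- T ≠ 0
      intro hT0
      subst hT0
      set R : ℂ →L[ℂ] EuclideanSpace ℂ (Fin 2) :=
        (1 : ℂ →L[ℂ] ℂ).smulRight (EuclideanSpace.single 0 1) with hR
      have hRapp : ∀ c : ℂ, R c = c • EuclideanSpace.single 0 (1:ℂ) := by
        intro c; simp [hR]
      have hkey : ∀ M : ↥T2, Matrix.toEuclideanCLM (𝕜 := ℂ)
          (M : Matrix (Fin 2) (Fin 2) ℂ) (EuclideanSpace.single 0 1)
          = EuclideanSpace.single 0 ((M : Matrix (Fin 2) (Fin 2) ℂ) 0 0) := by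
        intro M
        have hM : (M : Matrix (Fin 2) (Fin 2) ℂ) 1 0 = 0 := M.2
        apply (WithLp.equiv 2 (Fin 2 → ℂ)).injective
        rw [WithLp.equiv_apply, WithLp.equiv_apply, Matrix.ofLp_toEuclideanCLM]
        funext i
        fin_cases i <;>
          simp [Matrix.toLin'_apply, Matrix.mulVec_single, hM]
      have hRmod : IsModuleMap ↥T2 (repDiag 0) repE R := by
        intro M c
        rw [hRapp, hRapp, repDiag_apply, repE_apply, map_smul, hkey]
        apply (WithLp.equiv 2 (Fin 2 → ℂ)).injective
        funext i
        fin_cases i <;> simp [mul_comm]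
      have hRne : R ≠ 0 := by
        intro h
        have h2 : R 1 = 0 := by rw [h]; rfl
        rw [hRapp, one_smul] at h2
        have h3 := congrArg norm h2
        rw [EuclideanSpace.norm_single] at h3
        simp at h3
      obtain ⟨V, hVmod, hVR⟩ := hCog ℂ (EuclideanSpace ℂ (Fin 2)) (repDiag 0) repE
        (repDiag_isRep 0) repE_isRep R hRmod hRne
      apply hVR
      have hsingle : EuclideanSpace.single 0 (1:ℂ) = repE eM12 (EuclideanSpace.single 1 1) := by
        rw [repE_apply]
        apply (WithLp.equiv 2 (Fin 2 → ℂ)).injective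
        rw [WithLp.equiv_apply, WithLp.equiv_apply, Matrix.ofLp_toEuclideanCLM]
        funext i
        fin_cases i <;> simp [Matrix.toLin'_apply, Matrix.mulVec_single, eM12]
      refine ContinuousLinearMap.ext fun c => ?_
      show V (R c) = 0
      rw [hRapp, map_smul, hsingle, hVmod eM12 (EuclideanSpace.single 1 1), triRep_apply_eq]
      simp only [eM12_00, eM12_01, eM12_11, zero_smul, one_smul, zero_add,
        ContinuousLinearMap.zero_apply]
      rw [show ((0:H₁), (0:H₂)) = (0 : H₁ × H₂) from rfl, map_zero, smul_zero]
  · rintro ⟨hinj, hT0⟩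
    obtain ⟨k, hk0, hTk⟩ : ∃ k : H₂, k ≠ 0 ∧ T k = 0 := by
      rw [Function.not_injective_iff] at hinj
      obtain ⟨a, b, hab, hne⟩ := hinj
      exact ⟨a - b, sub_ne_zero.mpr hne, by rw [map_sub, hab, sub_self]⟩
    obtain ⟨η₀, hη₀⟩ : ∃ η : H₂, T η ≠ 0 := by
      by_contra h
      push_neg at h
      exact hT0 (ContinuousLinearMap.ext fun η => by simpa using h η)
    intro K L _ _ _ _ _ _ πK πL hK hL R hRmod hRne
    obtain ⟨y, hy⟩ : ∃ y : K, R y ≠ 0 := by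
      by_contra h
      push_neg at h
      exact hRne (ContinuousLinearMap.ext fun y => by simpa using h y)
    have hπL1 : πL 1 = 1 := rep_one πL hL
    have hsplit : πL eM11 (R y) + πL eM22 (R y) = R y := by
      have hsum : πL eM11 + πL eM22 = 1 := by rw [← map_add, ← one_eq_eM, hπL1]
      calc πL eM11 (R y) + πL eM22 (R y) = (πL eM11 + πL eM22) (R y) := rfl
        _ = R y := by rw [hsum]; rfl
    have op1 : ∀ (M : ↥T2) (z : L), πL eM11 (πL M z)
        = ((M : Matrix (Fin 2) (Fin 2) ℂ) 0 0) • πL eM11 z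
          + ((M : Matrix (Fin 2) (Fin 2) ℂ) 0 1) • πL eM12 z := by
      intro M z
      calc πL eM11 (πL M z) = (πL eM11 * πL M) z := rfl
        _ = πL (eM11 * M) z := by rw [map_mul]
        _ = πL (((M : Matrix (Fin 2) (Fin 2) ℂ) 0 0) • eM11
            + ((M : Matrix (Fin 2) (Fin 2) ℂ) 0 1) • eM12) z := by rw [eM11_mul]
        _ = _ := by rw [map_add, map_smul, map_smul]; rfl
    have op2 : ∀ (M : ↥T2) (z : L), πL eM12 (πL M z)
        = ((M : Matrix (Fin 2) (Fin 2) ℂ) 1 1) • πL eM12 z := by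
      intro M z
      calc πL eM12 (πL M z) = (πL eM12 * πL M) z := rfl
        _ = πL (eM12 * M) z := by rw [map_mul]
        _ = πL (((M : Matrix (Fin 2) (Fin 2) ℂ) 1 1) • eM12) z := by rw [eM12_mul]
        _ = _ := by rw [map_smul]; rfl
    have op3 : ∀ (M : ↥T2) (z : L), πL eM22 (πL M z)
        = ((M : Matrix (Fin 2) (Fin 2) ℂ) 1 1) • πL eM22 z := by
      intro M z
      calc πL eM22 (πL M z) = (πL eM22 * πL M) z := rfl
        _ = πL (eM22 * M) z := by rw [map_mul]
        _ = πL (((M : Matrix (Fin 2) (Fin 2) ℂ) 1 1) • eM22) z := by rw [eM22_mul]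
        _ = _ := by rw [map_smul]; rfl
    by_cases hcase : πL eM22 (R y) = 0
    · -- Case B : x := πL eM11 (R y) = R y ≠ 0
      set x : L := πL eM11 (R y) with hx
      have hxRy : x = R y := by
        rw [← hsplit, hcase, add_zero]
      have hxne : x ≠ 0 := by rw [hxRy]; exact hy
      set V : L →L[ℂ] WithLp 2 (H₁ × H₂) :=
        ((WithLp.prodContinuousLinearEquiv 2 ℂ H₁ H₂).symm.toContinuousLinearMap).comp
          ((((innerSL ℂ x).comp (πL eM11)).smulRight (T η₀)).prod
            (((innerSL ℂ x).comp (πL eM12)).smulRight η₀)) with hV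
      have hVapp : ∀ z : L, V z = (WithLp.prodContinuousLinearEquiv 2 ℂ H₁ H₂).symm
          ((inner ℂ x (πL eM11 z) : ℂ) • T η₀, (inner ℂ x (πL eM12 z) : ℂ) • η₀) := by
        intro z; rfl
      refine ⟨V, ?_, ?_⟩
      · intro M z
        rw [hVapp, hVapp, triRep_apply_eq, ContinuousLinearEquiv.apply_symm_apply]
        congr 1
        refine Prod.ext ?_ ?_
        · show (inner ℂ x (πL eM11 (πL M z)) : ℂ) • T η₀ = _
          rw [op1, inner_add_right, inner_smul_right, inner_smul_right]
          simp only [map_smul, smul_smul, add_smul]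
        · show (inner ℂ x (πL eM12 (πL M z)) : ℂ) • η₀ = _
          rw [op2, inner_smul_right]
          simp only [smul_smul]
      · intro h0
        have hz : V (R y) = 0 := by rw [← ContinuousLinearMap.comp_apply, h0]; rfl
        rw [hVapp, ← hx] at hz
        have hz2 : ((inner ℂ x x : ℂ) • T η₀, (inner ℂ x (πL eM12 (R y)) : ℂ) • η₀)
            = (0 : H₁ × H₂) :=
          (ContinuousLinearEquiv.map_eq_zero_iff
            (WithLp.prodContinuousLinearEquiv 2 ℂ H₁ H₂).symm).mp hz
        have hfst : (inner ℂ x x : ℂ) • T η₀ = 0 := congrArg Prod.fst hz2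
        rcases smul_eq_zero.mp hfst with h | h
        · exact hxne (inner_self_eq_zero.mp h)
        · exact hη₀ h
    · -- Case A : η := πL eM22 (R y) ≠ 0
      set η : L := πL eM22 (R y) with hη
      set V : L →L[ℂ] WithLp 2 (H₁ × H₂) :=
        ((WithLp.prodContinuousLinearEquiv 2 ℂ H₁ H₂).symm.toContinuousLinearMap).comp
          ((0 : L →L[ℂ] H₁).prod
            (((innerSL ℂ η).comp (πL eM22)).smulRight k)) with hV
      have hVapp : ∀ z : L, V z = (WithLp.prodContinuousLinearEquiv 2 ℂ H₁ H₂).symm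
          ((0 : H₁), (inner ℂ η (πL eM22 z) : ℂ) • k) := by
        intro z; rfl
      refine ⟨V, ?_, ?_⟩
      · intro M z
        rw [hVapp, hVapp, triRep_apply_eq, ContinuousLinearEquiv.apply_symm_apply]
        congr 1
        refine Prod.ext ?_ ?_
        · show (0 : H₁) = ((M : Matrix (Fin 2) (Fin 2) ℂ) 0 0) • (0:H₁)
            + ((M : Matrix (Fin 2) (Fin 2) ℂ) 0 1) • T ((inner ℂ η (πL eM22 z) : ℂ) • k)
          rw [map_smul, hTk, smul_zero, smul_zero, smul_zero, add_zero]
        · show (inner ℂ η (πL eM22 (πL M z)) : ℂ) • k = _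
          rw [op3, inner_smul_right]
          simp only [smul_smul]
      · intro h0
        have hz : V (R y) = 0 := by rw [← ContinuousLinearMap.comp_apply, h0]; rfl
        rw [hVapp, ← hη] at hz
        have hz2 : ((0 : H₁), (inner ℂ η η : ℂ) • k) = (0 : H₁ × H₂) :=
          (ContinuousLinearEquiv.map_eq_zero_iff
            (WithLp.prodContinuousLinearEquiv 2 ℂ H₁ H₂).symm).mp hz
        have hsnd : (inner ℂ η η : ℂ) • k = 0 := congrArg Prod.snd hz2
        rcases smul_eq_zero.mp hsnd with h | h
        · exact hcase (inner_self_eq_zero.mp h)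
        · exact hk0 h
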